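/- If an even lattice M of signature (n,2) with n ≥ 3 is 2-reflective, then every even overlattice of M is also 2-reflective; equivalently, if M is not 2-reflective, then no finite-index even sublattice of M is 2-reflective. -/

import Mathlib

noncomputable section

open Matrix

/-- An integral lattice of rank `n`, presented by its Gram matrix with respect to
a fixed basis of the underlying free `ℤ`-module. -/
structure IntLat where
  n : ℕ
  gram : Matrix (Fin n) (Fin n) ℤ

namespace IntLat

/-- The integral quadratic form `(v, v)` of a lattice. -/
def qf (L : IntLat) (v : Fin L.n → ℤ) : ℤ := v ⬝ᵥ (L.gram *ᵥ v)

/-- `L` is an even lattice: symmetric, even and nondegenerate. -/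
def IsEvenLat (L : IntLat) : Prop :=
  L.gram.IsSymm ∧ (∀ v : Fin L.n → ℤ, 2 ∣ L.qf v) ∧ L.gram.det ≠ 0

/-- `L` is positive definite. -/
def IsPosDef (L : IntLat) : Prop := ∀ v : Fin L.n → ℤ, v ≠ 0 → 0 < L.qf v

/-- Two lattices are isomorphic (isometric over `ℤ`). -/
def Isomorphic (L₁ L₂ : IntLat) : Prop :=
  ∃ (P : Matrix (Fin L₁.n) (Fin L₂.n) ℤ) (Q : Matrix (Fin L₂.n) (Fin L₁.n) ℤ),
    P * Q = 1 ∧ Q * P = 1 ∧ Pᵀ * L₁.gram * P = L₂.gram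

/-- `L` has signature `(p, q)`: over `ℝ` the form diagonalizes with `p` positive and
`q` negative entries. -/
def HasSig (L : IntLat) (p q : ℕ) : Prop :=
  L.n = p + q ∧
  ∃ P : Matrix (Fin L.n) (Fin L.n) ℝ, IsUnit P.det ∧
    Pᵀ * L.gram.map ((↑) : ℤ → ℝ) * P =
      Matrix.diagonal (fun i : Fin L.n => if (i : ℕ) < p then (1 : ℝ) else -1)

/-- Orthogonal direct sum of two lattices. -/
def dsum (L₁ L₂ : IntLat) : IntLat :=
  ⟨L₁.n + L₂.n, Matrix.reindex finSumFinEquiv finSumFinEquiv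
    (Matrix.fromBlocks L₁.gram 0 0 L₂.gram)⟩

/-- The rescaled lattice `L(a)`. -/
def rescale (L : IntLat) (a : ℤ) : IntLat := ⟨L.n, a • L.gram⟩

/-- The orthogonal direct sum of `m` copies of `L`. -/
def copies : ℕ → IntLat → IntLat
  | 0, _ => ⟨0, 1⟩
  | m + 1, L => dsum L (copies m L)

/-- The dual lattice of `L` rescaled by `a` (an integral lattice whenever `a` times the
inverse Gram matrix is integral, e.g. `D₈'(2)` and `E₆'(3)`). -/
def dualRescale (L : IntLat) (a : ℤ) : IntLat :=
  ⟨L.n, fun i j => ((a : ℚ) * ((L.gram.map ((↑) : ℤ → ℚ))⁻¹ i j)).num⟩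

/-- The even unimodular lattice `U` of signature `(1,1)`. -/
def latU : IntLat := ⟨2, !![0, 1; 1, 0]⟩

/-- The root lattice `Aₙ` (via its Cartan matrix). -/
def latA (n : ℕ) : IntLat :=
  ⟨n, fun i j => if i = j then 2
      else if i.val + 1 = j.val ∨ j.val + 1 = i.val then -1 else 0⟩

/-- The root lattice `Dₙ` (via its Cartan matrix: a chain on nodes `0, …, n-2`
with the node `n-1` attached to node `n-3`). -/
def latD (n : ℕ) : IntLat :=
  ⟨n, fun i j => if i = j then 2
      else if (i.val + 1 = j.val ∨ j.val + 1 = i.val) ∧ i.val + 1 ≠ n ∧ j.val + 1 ≠ n then -1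
      else if (i.val + 3 = n ∧ j.val + 1 = n) ∨ (j.val + 3 = n ∧ i.val + 1 = n) then -1
      else 0⟩

/-- The root lattices `E₆`, `E₇`, `E₈` (via their Cartan matrices: a chain on nodes
`0, …, n-2` with the node `n-1` attached to node `2`). -/
def latE (n : ℕ) : IntLat :=
  ⟨n, fun i j => if i = j then 2
      else if (i.val + 1 = j.val ∨ j.val + 1 = i.val) ∧ i.val + 1 ≠ n ∧ j.val + 1 ≠ n then -1
      else if (i.val = 2 ∧ j.val + 1 = n) ∨ (j.val = 2 ∧ i.val + 1 = n) then -1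
      else 0⟩

/-- The `ℂ`-bilinear extension of the bilinear form of `L` to `M ⊗ ℂ`. -/
def bC (L : IntLat) (Z W : Fin L.n → ℂ) : ℂ :=
  Z ⬝ᵥ ((L.gram.map ((↑) : ℤ → ℂ)) *ᵥ W)

/-- The full affine cone `{Z ∈ M ⊗ ℂ : (Z,Z) = 0, (Z, Z̄) < 0}` (union of the affine
cones over the two connected components of the period domain). -/
def coneSet (L : IntLat) : Set (Fin L.n → ℂ) :=
  {Z | L.bC Z Z = 0 ∧ (L.bC Z (fun i => (starRingEnd ℂ) (Z i))).re < 0}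

/-- `𝒜` is (the affine cone over) a connected component of the period domain. -/
def IsComponent (L : IntLat) (𝒜 : Set (Fin L.n → ℂ)) : Prop :=
  ∃ Z ∈ L.coneSet, 𝒜 = connectedComponentIn L.coneSet Z

/-- Action of an integral matrix on `M ⊗ ℂ`. -/
def act (L : IntLat) (P : Matrix (Fin L.n) (Fin L.n) ℤ) (Z : Fin L.n → ℂ) : Fin L.n → ℂ :=
  (P.map ((↑) : ℤ → ℂ)) *ᵥ Z

/-- The group `O⁺(M)`: integral isometries of `M` preserving the component `𝒜`. -/
def Oplus (L : IntLat) (𝒜 : Set (Fin L.n → ℂ)) : Set (Matrix (Fin L.n) (Fin L.n) ℤ) :=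
  {P | (∃ Q : Matrix (Fin L.n) (Fin L.n) ℤ, P * Q = 1 ∧ Q * P = 1) ∧
    Pᵀ * L.gram * P = L.gram ∧ ∀ Z ∈ 𝒜, L.act P Z ∈ 𝒜}

/-- `Γ` is a finite-index subgroup of `O⁺(M)`. -/
def IsFinIndexSubgroup (L : IntLat) (𝒜 : Set (Fin L.n → ℂ))
    (Γ : Set (Matrix (Fin L.n) (Fin L.n) ℤ)) : Prop :=
  Γ ⊆ L.Oplus 𝒜 ∧ (1 : Matrix (Fin L.n) (Fin L.n) ℤ) ∈ Γ ∧
  (∀ P ∈ Γ, ∀ Q ∈ Γ, P * Q ∈ Γ) ∧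
  (∀ P ∈ Γ, ∀ Q : Matrix (Fin L.n) (Fin L.n) ℤ, P * Q = 1 → Q * P = 1 → Q ∈ Γ) ∧
  ∃ (k : ℕ) (r : Fin k → Matrix (Fin L.n) (Fin L.n) ℤ),
    ∀ g ∈ L.Oplus 𝒜, ∃ i : Fin k, ∃ h ∈ Γ, g = r i * h

/-- A modular form of weight `k` and character `χ` for `Γ` on the component `𝒜`:
a holomorphic function on the affine cone, homogeneous of degree `-k` and
`Γ`-equivariant with character `χ`. -/
def IsModForm (L : IntLat) (𝒜 : Set (Fin L.n → ℂ)) (Γ : Set (Matrix (Fin L.n) (Fin L.n) ℤ))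
    (k : ℤ) (χ : Matrix (Fin L.n) (Fin L.n) ℤ → ℂ) (F : (Fin L.n → ℂ) → ℂ) : Prop :=
  DifferentiableOn ℂ F 𝒜 ∧
  (∀ t : ℂ, t ≠ 0 → ∀ Z ∈ 𝒜, F (t • Z) = t ^ (-k) * F Z) ∧
  (∀ P ∈ Γ, ∀ Z ∈ 𝒜, F (L.act P Z) = χ P * F Z)

/-- A `2`-root of `L`. -/
def IsTwoRoot (L : IntLat) (l : Fin L.n → ℤ) : Prop := L.qf l = 2

/-- `Z` lies on the quadratic divisor `l^⊥`. -/
def orthDiv (L : IntLat) (Z : Fin L.n → ℂ) (l : Fin L.n → ℤ) : Prop :=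
  L.bC Z (fun i => (l i : ℂ)) = 0

/-- A `2`-reflective modular form: non-constant, with zero set contained in the union
of the quadratic divisors orthogonal to `2`-roots. -/
def IsTwoReflForm (L : IntLat) (𝒜 : Set (Fin L.n → ℂ))
    (Γ : Set (Matrix (Fin L.n) (Fin L.n) ℤ)) (k : ℤ)
    (χ : Matrix (Fin L.n) (Fin L.n) ℤ → ℂ) (F : (Fin L.n → ℂ) → ℂ) : Prop :=
  L.IsModForm 𝒜 Γ k χ F ∧
  (¬ ∃ c : ℂ, ∀ Z ∈ 𝒜, F Z = c) ∧
  (∀ Z ∈ 𝒜, F Z = 0 → ∃ l : Fin L.n → ℤ, L.IsTwoRoot l ∧ L.orthDiv Z l)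

/-- The lattice `L` is `2`-reflective: some finite-index subgroup of `O⁺(L)` admits a
`2`-reflective modular form. -/
def IsTwoReflective (L : IntLat) : Prop :=
  ∃ 𝒜, L.IsComponent 𝒜 ∧ ∃ Γ, L.IsFinIndexSubgroup 𝒜 Γ ∧
    ∃ (k : ℤ) (χ : Matrix (Fin L.n) (Fin L.n) ℤ → ℂ) (F : (Fin L.n → ℂ) → ℂ),
      L.IsTwoReflForm 𝒜 Γ k χ F

/-- A complete `2`-reflective modular form: a modular form for the full group `O⁺(L)`
whose zero divisor is the sum with multiplicity one of all quadratic divisors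
orthogonal to `2`-roots (the multiplicity-one condition is expressed by nonvanishing of
the differential at smooth points of the divisor lying on a single quadratic divisor). -/
def IsCompleteTwoReflForm (L : IntLat) (𝒜 : Set (Fin L.n → ℂ)) (k : ℤ)
    (χ : Matrix (Fin L.n) (Fin L.n) ℤ → ℂ) (F : (Fin L.n → ℂ) → ℂ) : Prop :=
  L.IsModForm 𝒜 (L.Oplus 𝒜) k χ F ∧
  (¬ ∃ c : ℂ, ∀ Z ∈ 𝒜, F Z = c) ∧
  (∀ Z ∈ 𝒜, (F Z = 0 ↔ ∃ l : Fin L.n → ℤ, L.IsTwoRoot l ∧ L.orthDiv Z l)) ∧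
  (∀ Z ∈ 𝒜, F Z = 0 →
    (∀ l l' : Fin L.n → ℤ, L.IsTwoRoot l → L.IsTwoRoot l' →
      L.orthDiv Z l → L.orthDiv Z l' → l' = l ∨ l' = -l) →
    fderivWithin ℂ F 𝒜 Z ≠ 0)

/-- The lattice `L` is complete `2`-reflective. -/
def IsCompleteTwoReflective (L : IntLat) : Prop :=
  ∃ 𝒜, L.IsComponent 𝒜 ∧ ∃ (k : ℤ) (χ : Matrix (Fin L.n) (Fin L.n) ℤ → ℂ)
    (F : (Fin L.n → ℂ) → ℂ), L.IsCompleteTwoReflForm 𝒜 k χ F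

/-- The discriminant group `A_L = L'/L ≅ ℤⁿ / (gram L) ℤⁿ`. -/
def discGroup (L : IntLat) : Type :=
  (Fin L.n → ℤ) ⧸ LinearMap.range (Matrix.toLin' L.gram)

instance (L : IntLat) : AddCommGroup L.discGroup :=
  inferInstanceAs (AddCommGroup ((Fin L.n → ℤ) ⧸ LinearMap.range (Matrix.toLin' L.gram)))

instance (L : IntLat) : Module ℤ L.discGroup :=
  inferInstanceAs (Module ℤ ((Fin L.n → ℤ) ⧸ LinearMap.range (Matrix.toLin' L.gram)))

/-- The length `l(L)`: the minimal number of generators of the discriminant group. -/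
def latLength (L : IntLat) : ℕ :=
  sInf {k : ℕ | ∃ f : Fin k → L.discGroup, Submodule.span ℤ (Set.range f) = ⊤}

/-- The exponent `e(L)`: the maximal order of an element of the discriminant group. -/
def latExponent (L : IntLat) : ℕ := AddMonoid.exponent L.discGroup

/-- The `p`-primary component of the discriminant group. -/
def primaryPart (L : IntLat) (p : ℕ) : Submodule ℤ L.discGroup where
  carrier := {x | ∃ m : ℕ, ((p : ℤ) ^ m) • x = 0}
  zero_mem' := ⟨0, smul_zero _⟩
  add_mem' := by
    intro x y hx hy
    obtain ⟨a, ha⟩ := hx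
    obtain ⟨b, hb⟩ := hy
    refine ⟨a + b, ?_⟩
    have hx' : ((p : ℤ) ^ (a + b)) • x = 0 := by
      have h : ((p : ℤ) ^ (a + b)) = (p : ℤ) ^ b * (p : ℤ) ^ a := by ring
      rw [h, mul_smul, ha, smul_zero]
    have hy' : ((p : ℤ) ^ (a + b)) • y = 0 := by
      have h : ((p : ℤ) ^ (a + b)) = (p : ℤ) ^ a * (p : ℤ) ^ b := by ring
      rw [h, mul_smul, hb, smul_zero]
    rw [smul_add, hx', hy', add_zero]
  smul_mem' := by
    intro c x hx
    obtain ⟨m, hm⟩ := hx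
    exact ⟨m, by rw [smul_smul, mul_comm, ← smul_smul, hm, smul_zero]⟩

/-- The length `l(A_L)_p` of the `p`-primary part of the discriminant group. -/
def latLengthP (L : IntLat) (p : ℕ) : ℕ :=
  sInf {k : ℕ | ∃ f : Fin k → L.discGroup,
    Submodule.span ℤ (Set.range f) = L.primaryPart p}

/-- `N` is an even overlattice of `M`: `M` embeds isometrically into the even lattice `N`
with finite index (automatically `M ⊆ N ⊆ M'`). -/
def IsEvenOverlattice (N M : IntLat) : Prop :=
  IsEvenLat N ∧ N.n = M.n ∧ ∃ S : Matrix (Fin N.n) (Fin M.n) ℤ, Sᵀ * N.gram * S = M.gram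

/-- `M` is a maximal even lattice: every even overlattice of `M` is `M` itself. -/
def IsMaximalEven (M : IntLat) : Prop :=
  IsEvenLat M ∧ ∀ N : IntLat, IsEvenOverlattice N M → Isomorphic N M

/-- The rational Gram matrix. -/
def gramQ (L : IntLat) : Matrix (Fin L.n) (Fin L.n) ℚ := L.gram.map ((↑) : ℤ → ℚ)

/-- A rational vector with integral entries. -/
def IsIntVec {n : ℕ} (x : Fin n → ℚ) : Prop := ∀ i, ∃ z : ℤ, x i = (z : ℚ)

/-- The `Norm₂` condition: every coset `γ ∈ L'/L` contains a vector of norm at most `2`.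
(Vectors of `L'` are the rational vectors `x` with `(gram L) x` integral.) -/
def Norm2Cond (L : IntLat) : Prop :=
  ∀ x : Fin L.n → ℚ, IsIntVec (L.gramQ *ᵥ x) →
    ∃ z : Fin L.n → ℤ,
      (x + fun i => (z i : ℚ)) ⬝ᵥ (L.gramQ *ᵥ (x + fun i => (z i : ℚ))) ≤ 2

/-- `Λ` is a Leech lattice: even unimodular positive definite of rank `24` with no
vector of norm `2`. -/
def IsLeech (Λ : IntLat) : Prop :=
  Λ.n = 24 ∧ IsEvenLat Λ ∧ IsPosDef Λ ∧ Λ.gram.det = 1 ∧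
    ¬ ∃ v : Fin Λ.n → ℤ, Λ.qf v = 2

/-- `L` is a primitive sublattice of `Λ`: there is an isometric embedding `Λ ⊇ L`
whose image is a direct summand of `Λ` (equivalently, `Λ/L` is torsion-free). -/
def IsPrimitiveSublatticeOf (L Λ : IntLat) : Prop :=
  ∃ S : Matrix (Fin Λ.n) (Fin L.n) ℤ,
    Sᵀ * Λ.gram * S = L.gram ∧ ∃ T : Matrix (Fin L.n) (Fin Λ.n) ℤ, T * S = 1

/-- Two lattices lie in the same genus: their quadratic forms are equivalent over `ℝ`
and over `ℤ_p` for every prime `p`. -/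
def SameGenus (L₁ L₂ : IntLat) : Prop :=
  (∃ P : Matrix (Fin L₁.n) (Fin L₂.n) ℝ,
      (∃ Q : Matrix (Fin L₂.n) (Fin L₁.n) ℝ, P * Q = 1 ∧ Q * P = 1) ∧
      Pᵀ * L₁.gram.map ((↑) : ℤ → ℝ) * P = L₂.gram.map ((↑) : ℤ → ℝ)) ∧
  ∀ (p : ℕ) (hp : Fact (Nat.Prime p)),
    ∃ P : Matrix (Fin L₁.n) (Fin L₂.n) (@PadicInt p hp),
      (∃ Q : Matrix (Fin L₂.n) (Fin L₁.n) (@PadicInt p hp), P * Q = 1 ∧ Q * P = 1) ∧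
      Pᵀ * L₁.gram.map ((↑) : ℤ → @PadicInt p hp) * P =
        L₂.gram.map ((↑) : ℤ → @PadicInt p hp)

/-- `P` acts trivially on the discriminant group `M'/M`: `P x - x ∈ M` for all `x ∈ M'`. -/
def InDiscKernel (L : IntLat) (P : Matrix (Fin L.n) (Fin L.n) ℤ) : Prop :=
  ∀ x : Fin L.n → ℚ, IsIntVec (L.gramQ *ᵥ x) →
    IsIntVec ((P.map ((↑) : ℤ → ℚ)) *ᵥ x - x)

/-- The discriminant kernel `Õ⁺(M) ≤ O⁺(M)`. -/
def DiscKernel (L : IntLat) (𝒜 : Set (Fin L.n → ℂ)) : Set (Matrix (Fin L.n) (Fin L.n) ℤ) :=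
  {P | P ∈ L.Oplus 𝒜 ∧ L.InDiscKernel P}

end IntLat

infixl:65 " ⊕ᵈ " => IntLat.dsum

open IntLat
namespace TwoReflAux
open IntLat Matrix

variable {m : ℕ}

/-- Complexification of an integer matrix. -/
def MC (R : Matrix (Fin m) (Fin m) ℤ) : Matrix (Fin m) (Fin m) ℂ :=
  R.map ((↑) : ℤ → ℂ)

lemma MC_mul (P Q : Matrix (Fin m) (Fin m) ℤ) : MC (P * Q) = MC P * MC Q :=
  Matrix.map_mul (f := Int.castRingHom ℂ)

lemma MC_one : MC (1 : Matrix (Fin m) (Fin m) ℤ) = 1 :=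
  Matrix.map_one _ (by simp) (by simp)

lemma MC_transpose (R : Matrix (Fin m) (Fin m) ℤ) : MC Rᵀ = (MC R)ᵀ :=
  Matrix.transpose_map

lemma conj_mulVec (R : Matrix (Fin m) (Fin m) ℤ) (Z : Fin m → ℂ) :
    (fun i => (starRingEnd ℂ) ((MC R *ᵥ Z) i)) = MC R *ᵥ fun i => (starRingEnd ℂ) (Z i) := by
  funext i
  simp [MC, Matrix.mulVec, dotProduct, map_sum]

lemma sandwich (R G : Matrix (Fin m) (Fin m) ℂ) (Z W : Fin m → ℂ) :
    (R *ᵥ Z) ⬝ᵥ (G *ᵥ (R *ᵥ W)) = Z ⬝ᵥ ((Rᵀ * G * R) *ᵥ W) := by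
  rw [Matrix.mulVec_mulVec, Matrix.dotProduct_mulVec, ← Matrix.vecMul_transpose,
    Matrix.vecMul_vecMul, ← Matrix.dotProduct_mulVec, ← Matrix.mul_assoc]

lemma bC_transport {G₁ G₂ R : Matrix (Fin m) (Fin m) ℤ} (h : Rᵀ * G₁ * R = G₂)
    (Z W : Fin m → ℂ) :
    IntLat.bC ⟨m, G₁⟩ (MC R *ᵥ Z) (MC R *ᵥ W) = IntLat.bC ⟨m, G₂⟩ Z W := by
  show (MC R *ᵥ Z) ⬝ᵥ (MC G₁ *ᵥ (MC R *ᵥ W)) = Z ⬝ᵥ (MC G₂ *ᵥ W)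
  rw [sandwich, ← MC_transpose, ← MC_mul, ← MC_mul, h]

lemma qf_transport {G₁ G₂ R : Matrix (Fin m) (Fin m) ℤ} (h : Rᵀ * G₁ * R = G₂)
    (v : Fin m → ℤ) :
    IntLat.qf ⟨m, G₁⟩ (R *ᵥ v) = IntLat.qf ⟨m, G₂⟩ v := by
  show (R *ᵥ v) ⬝ᵥ (G₁ *ᵥ (R *ᵥ v)) = v ⬝ᵥ (G₂ *ᵥ v)
  rw [Matrix.mulVec_mulVec, Matrix.dotProduct_mulVec, ← Matrix.vecMul_transpose,
    Matrix.vecMul_vecMul, ← Matrix.dotProduct_mulVec, ← Matrix.mul_assoc, h]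

lemma cone_transport {G₁ G₂ R : Matrix (Fin m) (Fin m) ℤ} (h : Rᵀ * G₁ * R = G₂)
    (Z : Fin m → ℂ) :
    Z ∈ IntLat.coneSet ⟨m, G₂⟩ ↔ MC R *ᵥ Z ∈ IntLat.coneSet ⟨m, G₁⟩ := by
  simp only [IntLat.coneSet, Set.mem_setOf_eq, conj_mulVec, bC_transport h]

end TwoReflAux
namespace TwoReflAux
open IntLat Matrix

variable {m : ℕ}

lemma cancel_left {S X Y : Matrix (Fin m) (Fin m) ℤ} (hS : S.det ≠ 0)
    (h : S * X = S * Y) : X = Y := by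
  have key : ∀ U V : Matrix (Fin m) (Fin m) ℤ,
      (U * V).map ((↑) : ℤ → ℚ) = U.map ((↑) : ℤ → ℚ) * V.map ((↑) : ℤ → ℚ) :=
    fun _ _ => Matrix.map_mul (f := Int.castRingHom ℚ)
  have hq : (S.map ((↑) : ℤ → ℚ)) * X.map ((↑) : ℤ → ℚ)
      = (S.map ((↑) : ℤ → ℚ)) * Y.map ((↑) : ℤ → ℚ) := by
    rw [← key, ← key, h]
  have hdc : ((S.det : ℚ)) = (S.map ((↑) : ℤ → ℚ)).det := RingHom.map_det (Int.castRingHom ℚ) S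
  have hdet : IsUnit (S.map ((↑) : ℤ → ℚ)).det := by
    rw [← hdc]
    simpa [isUnit_iff_ne_zero] using hS
  have := congrArg (fun T => (S.map ((↑) : ℤ → ℚ))⁻¹ * T) hq
  simp only [Matrix.nonsing_inv_mul_cancel_left _ _ hdet] at this
  exact Matrix.map_injective Int.cast_injective this

lemma act_act (L : IntLat) (P Q : Matrix (Fin L.n) (Fin L.n) ℤ) (Z : Fin L.n → ℂ) :
    L.act P (L.act Q Z) = L.act (P * Q) Z := by
  show MC P *ᵥ (MC Q *ᵥ Z) = MC (P * Q) *ᵥ Z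
  rw [Matrix.mulVec_mulVec, MC_mul]

lemma act_one (L : IntLat) (Z : Fin L.n → ℂ) : L.act 1 Z = Z := by
  show MC 1 *ᵥ Z = Z
  rw [MC_one, Matrix.one_mulVec]

/-- The key "stabilizer mod `det S`" lemma. -/
lemma stab (S x y yi : Matrix (Fin m) (Fin m) ℤ) (hyi : yi * y = 1)
    (hmod : x.map ((↑) : ℤ → ZMod S.det.natAbs) = y.map ((↑) : ℤ → ZMod S.det.natAbs)) :
    ∃ Q : Matrix (Fin m) (Fin m) ℤ, (yi * x) * S = S * Q := by
  have hdvd : ∀ i j, S.det ∣ (x - y) i j := by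
    intro i j
    have h0 : ((x i j - y i j : ℤ) : ZMod S.det.natAbs) = 0 := by
      have h1 := congrFun (congrFun hmod i) j
      simp only [Matrix.map_apply] at h1
      push_cast
      rw [h1, sub_self]
    have h2 := (ZMod.intCast_zmod_eq_zero_iff_dvd _ S.det.natAbs).mp h0
    have h3 : S.det ∣ x i j - y i j := Int.natAbs_dvd.mp h2
    simpa [Matrix.sub_apply] using h3
  set K : Matrix (Fin m) (Fin m) ℤ := Matrix.of fun i j => (x - y) i j / S.det with hKdef
  have hK : S.det • K = x - y := by
    ext i j
    simp only [Matrix.smul_apply, hKdef, Matrix.of_apply, smul_eq_mul]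
    exact Int.mul_ediv_cancel' (hdvd i j)
  refine ⟨1 + S.adjugate * (yi * K * S), ?_⟩
  have h4 : S * (1 + S.adjugate * (yi * K * S)) = S + S.det • (yi * K * S) := by
    rw [Matrix.mul_add, Matrix.mul_one, ← Matrix.mul_assoc, Matrix.mul_adjugate,
      Matrix.smul_mul, Matrix.one_mul]
  have h5 : S.det • (yi * K * S) = yi * (x - y) * S := by
    rw [← hK, Matrix.mul_smul, Matrix.smul_mul]
  have h6 : yi * (x - y) * S = yi * x * S - S := by
    rw [Matrix.mul_sub, Matrix.sub_mul, hyi, Matrix.one_mul]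
  rw [h4, h5, h6]
  abel

/-- The homeomorphism of `ℂ^m` given by an invertible matrix. -/
def mulVecHomeo (Rc Ri : Matrix (Fin m) (Fin m) ℂ) (h1 : Rc * Ri = 1) (h2 : Ri * Rc = 1) :
    (Fin m → ℂ) ≃ₜ (Fin m → ℂ) where
  toFun Z := Rc *ᵥ Z
  invFun Z := Ri *ᵥ Z
  left_inv Z := by show Ri *ᵥ (Rc *ᵥ Z) = Z; rw [Matrix.mulVec_mulVec, h2, Matrix.one_mulVec]
  right_inv Z := by show Rc *ᵥ (Ri *ᵥ Z) = Z; rw [Matrix.mulVec_mulVec, h1, Matrix.one_mulVec]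
  continuous_toFun := LinearMap.continuous_of_finiteDimensional (Matrix.mulVecLin Rc)
  continuous_invFun := LinearMap.continuous_of_finiteDimensional (Matrix.mulVecLin Ri)

lemma inv_isometry {G P Pi : Matrix (Fin m) (Fin m) ℤ} (h1 : P * Pi = 1)
    (hiso : Pᵀ * G * P = G) : Piᵀ * G * Pi = G := by
  have : Piᵀ * (Pᵀ * G * P) * Pi = (P * Pi)ᵀ * G * (P * Pi) := by
    rw [Matrix.transpose_mul]
    noncomm_ring
  rw [hiso] at this
  rw [this, h1, Matrix.transpose_one, Matrix.one_mul, Matrix.mul_one]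

end TwoReflAux
namespace TwoReflAux
open IntLat Matrix

variable {m : ℕ}

lemma cone_self {L : IntLat} {R : Matrix (Fin L.n) (Fin L.n) ℤ}
    (hR : Rᵀ * L.gram * R = L.gram) (Z : Fin L.n → ℂ) :
    Z ∈ L.coneSet ↔ MC R *ᵥ Z ∈ L.coneSet :=
  cone_transport (G₁ := L.gram) (G₂ := L.gram) hR Z

lemma oplus_mul {L : IntLat} {𝒜 : Set (Fin L.n → ℂ)} {P Q : Matrix (Fin L.n) (Fin L.n) ℤ}
    (hP : P ∈ L.Oplus 𝒜) (hQ : Q ∈ L.Oplus 𝒜) : P * Q ∈ L.Oplus 𝒜 := by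
  obtain ⟨⟨Pi, hP1, hP2⟩, hPiso, hPm⟩ := hP
  obtain ⟨⟨Qi, hQ1, hQ2⟩, hQiso, hQm⟩ := hQ
  refine ⟨⟨Qi * Pi, ?_, ?_⟩, ?_, ?_⟩
  · rw [Matrix.mul_assoc, ← Matrix.mul_assoc Q, hQ1, Matrix.one_mul, hP1]
  · rw [Matrix.mul_assoc, ← Matrix.mul_assoc Pi, hP2, Matrix.one_mul, hQ2]
  · rw [Matrix.transpose_mul]
    calc Qᵀ * Pᵀ * L.gram * (P * Q) = Qᵀ * (Pᵀ * L.gram * P) * Q := by noncomm_ring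
    _ = Qᵀ * L.gram * Q := by rw [hPiso]
    _ = L.gram := hQiso
  · intro Z hZ
    rw [← act_act]
    exact hPm _ (hQm _ hZ)

lemma oplus_image {L : IntLat} {𝒜 : Set (Fin L.n → ℂ)} (hc : L.IsComponent 𝒜)
    {P : Matrix (Fin L.n) (Fin L.n) ℤ} (hP : P ∈ L.Oplus 𝒜) :
    (L.act P) '' 𝒜 = 𝒜 := by
  obtain ⟨⟨Pi, hP1, hP2⟩, hPiso, hPm⟩ := hP
  obtain ⟨Z₀, hZ₀, h𝒜⟩ := hc
  have hMC1 : MC P * MC Pi = 1 := by rw [← MC_mul, hP1, MC_one]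
  have hMC2 : MC Pi * MC P = 1 := by rw [← MC_mul, hP2, MC_one]
  set e := mulVecHomeo (MC P) (MC Pi) hMC1 hMC2 with he
  have hPi_iso : Piᵀ * L.gram * Pi = L.gram := inv_isometry hP1 hPiso
  have hcone : e '' L.coneSet = L.coneSet := by
    ext Z
    constructor
    · rintro ⟨W, hW, rfl⟩
      exact (cone_self hPiso W).mp hW
    · intro hZ
      refine ⟨MC Pi *ᵥ Z, (cone_self hPi_iso Z).mp hZ, ?_⟩
      show MC P *ᵥ (MC Pi *ᵥ Z) = Z
      rw [Matrix.mulVec_mulVec, hMC1, Matrix.one_mulVec]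
  have heq : (L.act P) '' 𝒜 = e '' 𝒜 := rfl
  rw [heq, h𝒜, Homeomorph.image_connectedComponentIn e hZ₀, hcone]
  have hmem : L.act P Z₀ ∈ connectedComponentIn L.coneSet Z₀ := by
    rw [← h𝒜]
    exact hPm Z₀ (h𝒜 ▸ mem_connectedComponentIn hZ₀)
  exact (connectedComponentIn_eq hmem).symm

lemma oplus_inv {L : IntLat} {𝒜 : Set (Fin L.n → ℂ)} (hc : L.IsComponent 𝒜)
    {P Pi : Matrix (Fin L.n) (Fin L.n) ℤ} (hP : P ∈ L.Oplus 𝒜)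
    (h1 : P * Pi = 1) (h2 : Pi * P = 1) : Pi ∈ L.Oplus 𝒜 := by
  refine ⟨⟨P, h2, h1⟩, inv_isometry h1 hP.2.1, ?_⟩
  intro Z hZ
  rw [← oplus_image hc hP] at hZ
  obtain ⟨W, hW, rfl⟩ := hZ
  rw [act_act, h2, act_one]
  exact hW

end TwoReflAux
namespace TwoReflAux
open IntLat Matrix

lemma key (m : ℕ) (A B S : Matrix (Fin m) (Fin m) ℤ) (hA : A.det ≠ 0)
    (hS : Sᵀ * B * S = A) (h : IsTwoReflective ⟨m, A⟩) : IsTwoReflective ⟨m, B⟩ := by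
  classical
  obtain ⟨𝒜, hcomp, Γ, hΓ, k, χ, F, hform, hnc, hzero⟩ := h
  obtain ⟨hΓsub, hΓone, hΓmul, hΓinv, kM, rM, hcov⟩ := hΓ
  have hSdet : S.det ≠ 0 := by
    intro h0
    apply hA
    rw [← hS, Matrix.det_mul, Matrix.det_mul, h0, mul_zero]
  set Sc : Matrix (Fin m) (Fin m) ℂ := MC S with hScdef
  have hScdet : IsUnit Sc.det := by
    have hdc : ((S.det : ℂ)) = Sc.det := RingHom.map_det (Int.castRingHom ℂ) S
    rw [← hdc]
    simpa [isUnit_iff_ne_zero] using hSdet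
  have hST : Sc * Sc⁻¹ = 1 := Matrix.mul_nonsing_inv _ hScdet
  have hTS : Sc⁻¹ * Sc = 1 := Matrix.nonsing_inv_mul _ hScdet
  have hTSv : ∀ Z : Fin m → ℂ, Sc⁻¹ *ᵥ (Sc *ᵥ Z) = Z := fun Z => by
    rw [Matrix.mulVec_mulVec, hTS, Matrix.one_mulVec]
  have hSTv : ∀ Z : Fin m → ℂ, Sc *ᵥ (Sc⁻¹ *ᵥ Z) = Z := fun Z => by
    rw [Matrix.mulVec_mulVec, hST, Matrix.one_mulVec]
  set 𝒜B : Set (Fin m → ℂ) := (fun Z => Sc *ᵥ Z) '' 𝒜 with h𝒜B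
  have hmemB : ∀ W ∈ 𝒜, Sc *ᵥ W ∈ 𝒜B := fun W hW => ⟨W, hW, rfl⟩
  have hmemA : ∀ Z ∈ 𝒜B, Sc⁻¹ *ᵥ Z ∈ 𝒜 := by
    rintro Z ⟨W, hW, rfl⟩
    rw [hTSv]
    exact hW
  have hact : ∀ (P Q : Matrix (Fin m) (Fin m) ℤ), P * S = S * Q →
      ∀ Z : Fin m → ℂ, MC P *ᵥ (Sc *ᵥ Z) = Sc *ᵥ (MC Q *ᵥ Z) := by
    intro P Q hPQ Z
    rw [Matrix.mulVec_mulVec, Matrix.mulVec_mulVec, hScdef, ← MC_mul, ← MC_mul, hPQ]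
  -- the component
  have hconeeq : (fun Z => Sc *ᵥ Z) '' (IntLat.coneSet ⟨m, A⟩) = IntLat.coneSet ⟨m, B⟩ := by
    ext Z
    constructor
    · rintro ⟨W, hW, rfl⟩
      exact (cone_transport hS W).mp hW
    · intro hZ
      refine ⟨Sc⁻¹ *ᵥ Z, ?_, hSTv Z⟩
      have h1 := cone_transport hS (Sc⁻¹ *ᵥ Z)
      rw [← hScdef, hSTv Z] at h1
      exact h1.mpr hZ
  obtain ⟨Z₀, hZ₀, h𝒜⟩ := hcomp
  have hZ₀𝒜 : Z₀ ∈ 𝒜 := h𝒜 ▸ mem_connectedComponentIn hZ₀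
  have hcompB : IntLat.IsComponent ⟨m, B⟩ 𝒜B := by
    refine ⟨Sc *ᵥ Z₀, hconeeq ▸ ⟨Z₀, hZ₀, rfl⟩, ?_⟩
    have himg := Homeomorph.image_connectedComponentIn (mulVecHomeo Sc Sc⁻¹ hST hTS) hZ₀
    have hco : ⇑(mulVecHomeo Sc Sc⁻¹ hST hTS) = (fun Z => Sc *ᵥ Z) := rfl
    rw [hco] at himg
    rw [h𝒜B, h𝒜, himg, hconeeq]
  -- transfer of Oplus membership along P * S = S * Q
  have hQoplus : ∀ (P Q : Matrix (Fin m) (Fin m) ℤ), P ∈ IntLat.Oplus ⟨m, B⟩ 𝒜B →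
      (∃ Qi, Q * Qi = 1 ∧ Qi * Q = 1) → P * S = S * Q →
      Q ∈ IntLat.Oplus ⟨m, A⟩ 𝒜 := by
    intro P Q hPo hQi hPQ
    refine ⟨hQi, ?_, ?_⟩
    · have hPiso : Pᵀ * B * P = B := hPo.2.1
      have : Qᵀ * (Sᵀ * B * S) * Q = Sᵀ * B * S := by
        calc Qᵀ * (Sᵀ * B * S) * Q = (S * Q)ᵀ * B * (S * Q) := by
              rw [Matrix.transpose_mul]; noncomm_ring
        _ = (P * S)ᵀ * B * (P * S) := by rw [hPQ]
        _ = Sᵀ * (Pᵀ * B * P) * S := by rw [Matrix.transpose_mul]; noncomm_ring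
        _ = Sᵀ * B * S := by rw [hPiso]
      rw [← hS]
      exact this
    · intro W hW
      have h1 : Sc *ᵥ (MC Q *ᵥ W) = MC P *ᵥ (Sc *ᵥ W) := (hact P Q hPQ W).symm
      have h2 : MC P *ᵥ (Sc *ᵥ W) ∈ 𝒜B := hPo.2.2 _ (hmemB W hW)
      obtain ⟨W', hW', hEq⟩ := h2
      have h3 : MC Q *ᵥ W = W' := by
        have h4 := congrArg (fun Z => Sc⁻¹ *ᵥ Z) (h1.trans hEq.symm)
        simpa only [hTSv] using h4
      show MC Q *ᵥ W ∈ 𝒜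
      rw [h3]
      exact hW'
  -- the subgroup
  set ΓB : Set (Matrix (Fin m) (Fin m) ℤ) :=
    {P | P ∈ IntLat.Oplus ⟨m, B⟩ 𝒜B ∧ ∃ Q ∈ Γ, P * S = S * Q} with hΓBdef
  -- the character and the modular form
  set χB : Matrix (Fin m) (Fin m) ℤ → ℂ := fun P =>
    if hq : ∃ Q ∈ Γ, P * S = S * Q then χ hq.choose else 0 with hχBdef
  set FB : (Fin m → ℂ) → ℂ := fun Z => F (Sc⁻¹ *ᵥ Z) with hFBdef
  have hχB : ∀ P Q, Q ∈ Γ → P * S = S * Q → χB P = χ Q := by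
    intro P Q hQ hPQ
    have hq : ∃ Q ∈ Γ, P * S = S * Q := ⟨Q, hQ, hPQ⟩
    have h1 : χB P = χ hq.choose := dif_pos hq
    have h2 : hq.choose = Q :=
      cancel_left hSdet ((hq.choose_spec.2).symm.trans hPQ)
    rw [h1, h2]
  have hFB : ∀ W, FB (Sc *ᵥ W) = F W := fun W => by
    show F (Sc⁻¹ *ᵥ (Sc *ᵥ W)) = F W
    rw [hTSv]
  have honeB : (1 : Matrix (Fin m) (Fin m) ℤ) ∈ IntLat.Oplus ⟨m, B⟩ 𝒜B := by
    refine ⟨⟨1, Matrix.one_mul 1, Matrix.one_mul 1⟩, by simp, ?_⟩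
    intro Z hZ
    rw [act_one]
    exact hZ
  have honeA : (1 : Matrix (Fin m) (Fin m) ℤ) ∈ IntLat.Oplus ⟨m, A⟩ 𝒜 := by
    refine ⟨⟨1, Matrix.one_mul 1, Matrix.one_mul 1⟩, by simp, ?_⟩
    intro Z hZ
    rw [act_one]
    exact hZ
  refine ⟨𝒜B, hcompB, ΓB, ⟨fun P hP => hP.1, ?_, ?_, ?_, ?_⟩, k, χB, FB,
    ⟨⟨?_, ?_, ?_⟩, ?_, ?_⟩⟩
  · -- 1 ∈ ΓB
    exact ⟨honeB, 1, hΓone, by rw [Matrix.one_mul, Matrix.mul_one]⟩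
  · -- multiplication
    rintro P ⟨hPo, Q, hQΓ, hPQ⟩ P' ⟨hP'o, Q', hQ'Γ, hPQ'⟩
    refine ⟨oplus_mul hPo hP'o, Q * Q', hΓmul Q hQΓ Q' hQ'Γ, ?_⟩
    rw [Matrix.mul_assoc, hPQ', ← Matrix.mul_assoc, hPQ, Matrix.mul_assoc]
  · -- inverses
    rintro P ⟨hPo, Q, hQΓ, hPQ⟩ Pi h1 h2
    obtain ⟨Qi, hQ1, hQ2⟩ := (hΓsub hQΓ).1
    have hQiΓ := hΓinv Q hQΓ Qi hQ1 hQ2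
    refine ⟨oplus_inv hcompB hPo h1 h2, Qi, hQiΓ, ?_⟩
    calc Pi * S = Pi * S * (Q * Qi) := by rw [hQ1, Matrix.mul_one]
    _ = Pi * (S * Q) * Qi := by noncomm_ring
    _ = Pi * (P * S) * Qi := by rw [hPQ]
    _ = (Pi * P) * S * Qi := by noncomm_ring
    _ = S * Qi := by rw [h2, Matrix.one_mul]
  · -- finite index: the hard part
    set d : ℕ := S.det.natAbs with hd
    haveI : NeZero d := ⟨Int.natAbs_ne_zero.mpr hSdet⟩
    -- inverses inside the group
    have hinv' : ∀ g, g ∈ IntLat.Oplus ⟨m, B⟩ 𝒜B →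
        ∃ gi, g * gi = 1 ∧ gi * g = 1 ∧ gi ∈ IntLat.Oplus ⟨m, B⟩ 𝒜B := by
      intro g hg
      obtain ⟨gi, e1, e2⟩ := hg.1
      exact ⟨gi, e1, e2, oplus_inv hcompB hg e1 e2⟩
    choose! ginv hgi1 hgi2 hgiG using hinv'
    -- class representatives mod d
    have hred' : ∀ c : Matrix (Fin m) (Fin m) (ZMod d),
        (∃ g, g ∈ IntLat.Oplus ⟨m, B⟩ 𝒜B ∧ g.map ((↑) : ℤ → ZMod d) = c) →
        ∃ g, g ∈ IntLat.Oplus ⟨m, B⟩ 𝒜B ∧ g.map ((↑) : ℤ → ZMod d) = c := fun _ h => h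
    choose! rep hrepG hrepR using hred'
    -- the induced element of `O⁺(A)`
    have hQ' : ∀ g, g ∈ IntLat.Oplus ⟨m, B⟩ 𝒜B →
        ∃ Q, Q ∈ IntLat.Oplus ⟨m, A⟩ 𝒜 ∧
          (ginv (rep (g.map ((↑) : ℤ → ZMod d))) * g) * S = S * Q := by
      intro g hg
      have hex : ∃ g', g' ∈ IntLat.Oplus ⟨m, B⟩ 𝒜B ∧
          g'.map ((↑) : ℤ → ZMod d) = g.map ((↑) : ℤ → ZMod d) := ⟨g, hg, rfl⟩
      set g₀ := rep (g.map ((↑) : ℤ → ZMod d)) with hg₀def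
      have hg₀ : g₀ ∈ IntLat.Oplus ⟨m, B⟩ 𝒜B := hrepG _ hex
      have hredeq : g₀.map ((↑) : ℤ → ZMod d) = g.map ((↑) : ℤ → ZMod d) := hrepR _ hex
      obtain ⟨Q, hQeq⟩ := stab S g g₀ (ginv g₀) (hgi2 g₀ hg₀) hredeq.symm
      obtain ⟨Q', hQ'eq⟩ := stab S g₀ g (ginv g) (hgi2 g hg) hredeq
      have hh₁ : ginv g₀ * g ∈ IntLat.Oplus ⟨m, B⟩ 𝒜B := oplus_mul (hgiG _ hg₀) hg
      have hmul1 : (ginv g₀ * g) * (ginv g * g₀) = 1 := by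
        calc (ginv g₀ * g) * (ginv g * g₀) = ginv g₀ * (g * ginv g) * g₀ := by noncomm_ring
        _ = ginv g₀ * g₀ := by rw [hgi1 g hg, Matrix.mul_one]
        _ = 1 := hgi2 g₀ hg₀
      have hmul2 : (ginv g * g₀) * (ginv g₀ * g) = 1 := by
        calc (ginv g * g₀) * (ginv g₀ * g) = ginv g * (g₀ * ginv g₀) * g := by noncomm_ring
        _ = ginv g * g := by rw [hgi1 g₀ hg₀, Matrix.mul_one]
        _ = 1 := hgi2 g hg
      have hQQ' : Q * Q' = 1 := by
        apply cancel_left hSdet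
        rw [Matrix.mul_one]
        calc S * (Q * Q') = (S * Q) * Q' := by rw [Matrix.mul_assoc]
        _ = ((ginv g₀ * g) * S) * Q' := by rw [hQeq]
        _ = (ginv g₀ * g) * (S * Q') := by rw [Matrix.mul_assoc]
        _ = (ginv g₀ * g) * ((ginv g * g₀) * S) := by rw [hQ'eq]
        _ = ((ginv g₀ * g) * (ginv g * g₀)) * S := by noncomm_ring
        _ = S := by rw [hmul1, Matrix.one_mul]
      have hQ'Q : Q' * Q = 1 := by
        apply cancel_left hSdet
        rw [Matrix.mul_one]
        calc S * (Q' * Q) = (S * Q') * Q := by rw [Matrix.mul_assoc]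
        _ = ((ginv g * g₀) * S) * Q := by rw [hQ'eq]
        _ = (ginv g * g₀) * (S * Q) := by rw [Matrix.mul_assoc]
        _ = (ginv g * g₀) * ((ginv g₀ * g) * S) := by rw [hQeq]
        _ = ((ginv g * g₀) * (ginv g₀ * g)) * S := by noncomm_ring
        _ = S := by rw [hmul2, Matrix.one_mul]
      exact ⟨Q, hQoplus _ _ hh₁ ⟨Q', hQQ', hQ'Q⟩ hQeq, hQeq⟩
    choose! Qof hQofO hQofE using hQ'
    -- nonemptiness of the index type
    obtain ⟨j₀, -⟩ := hcov 1 honeA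
    haveI : Nonempty (Fin kM) := ⟨j₀⟩
    have hj' : ∀ g, g ∈ IntLat.Oplus ⟨m, B⟩ 𝒜B →
        ∃ (j : Fin kM) (hh : Matrix (Fin m) (Fin m) ℤ), hh ∈ Γ ∧ Qof g = rM j * hh := by
      intro g hg
      obtain ⟨j, hh, h1, h2⟩ := hcov (Qof g) (hQofO g hg)
      exact ⟨j, hh, h1, h2⟩
    choose! J hof hofΓ hofE using hj'
    -- representatives of pairs
    have hrp' : ∀ p : Matrix (Fin m) (Fin m) (ZMod d) × Fin kM,
        (∃ g, g ∈ IntLat.Oplus ⟨m, B⟩ 𝒜B ∧ g.map ((↑) : ℤ → ZMod d) = p.1 ∧ J g = p.2) →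
        ∃ g, g ∈ IntLat.Oplus ⟨m, B⟩ 𝒜B ∧ g.map ((↑) : ℤ → ZMod d) = p.1 ∧ J g = p.2 :=
      fun _ h => h
    choose! rp hrpG hrpR hrpJ using hrp'
    set eI := Fintype.equivFin (Matrix (Fin m) (Fin m) (ZMod d) × Fin kM) with heI
    refine ⟨Fintype.card (Matrix (Fin m) (Fin m) (ZMod d) × Fin kM),
      fun i => rp (eI.symm i), ?_⟩
    intro g hg
    have hex : ∃ g', g' ∈ IntLat.Oplus ⟨m, B⟩ 𝒜B ∧
        g'.map ((↑) : ℤ → ZMod d) = (g.map ((↑) : ℤ → ZMod d), J g).1 ∧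
        J g' = (g.map ((↑) : ℤ → ZMod d), J g).2 := ⟨g, hg, rfl, rfl⟩
    set g' := rp (g.map ((↑) : ℤ → ZMod d), J g) with hg'def
    have hg' : g' ∈ IntLat.Oplus ⟨m, B⟩ 𝒜B := hrpG _ hex
    have hR : g'.map ((↑) : ℤ → ZMod d) = g.map ((↑) : ℤ → ZMod d) := hrpR _ hex
    have hJ : J g' = J g := hrpJ _ hex
    refine ⟨eI (g.map ((↑) : ℤ → ZMod d), J g), ginv g' * g, ?_, ?_⟩
    · -- membership in ΓB
      refine ⟨oplus_mul (hgiG _ hg') hg, ?_⟩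
      set g₀ := rep (g.map ((↑) : ℤ → ZMod d)) with hg₀def
      have hg₀ : g₀ ∈ IntLat.Oplus ⟨m, B⟩ 𝒜B :=
        hrepG _ ⟨g, hg, rfl⟩
      have hQE : (ginv g₀ * g) * S = S * Qof g := hQofE g hg
      have hQE' : (ginv g₀ * g') * S = S * Qof g' := by
        have h1 := hQofE g' hg'
        rwa [hR] at h1
      obtain ⟨Q'i, hA1, hA2⟩ := (hQofO g' hg').1
      have he1 : (ginv g' * g₀) * (ginv g₀ * g') = 1 := by
        calc (ginv g' * g₀) * (ginv g₀ * g') = ginv g' * (g₀ * ginv g₀) * g' := by noncomm_ring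
        _ = ginv g' * g' := by rw [hgi1 g₀ hg₀, Matrix.mul_one]
        _ = 1 := hgi2 g' hg'
      have hstep1 : (ginv g' * g₀) * S = S * Q'i := by
        calc (ginv g' * g₀) * S
            = (ginv g' * g₀) * S * (Qof g' * Q'i) := by rw [hA1, Matrix.mul_one]
        _ = (ginv g' * g₀) * (S * Qof g') * Q'i := by noncomm_ring
        _ = (ginv g' * g₀) * ((ginv g₀ * g') * S) * Q'i := by rw [hQE']
        _ = ((ginv g' * g₀) * (ginv g₀ * g')) * S * Q'i := by noncomm_ring
        _ = S * Q'i := by rw [he1, Matrix.one_mul]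
      have hγeq : (ginv g' * g) * S = S * (Q'i * Qof g) := by
        calc (ginv g' * g) * S = ginv g' * (g₀ * ginv g₀) * g * S := by
              rw [hgi1 g₀ hg₀, Matrix.mul_one]
        _ = (ginv g' * g₀) * ((ginv g₀ * g) * S) := by noncomm_ring
        _ = (ginv g' * g₀) * (S * Qof g) := by rw [hQE]
        _ = ((ginv g' * g₀) * S) * Qof g := by noncomm_ring
        _ = (S * Q'i) * Qof g := by rw [hstep1]
        _ = S * (Q'i * Qof g) := by rw [Matrix.mul_assoc]
      have hofE' : Qof g' = rM (J g) * hof g' := by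
        have h1 := hofE g' hg'
        rwa [hJ] at h1
      obtain ⟨hi, hi1, hi2⟩ := (hΓsub (hofΓ g' hg')).1
      have hiΓ := hΓinv (hof g') (hofΓ g' hg') hi hi1 hi2
      have hrMeq : rM (J g) = Qof g' * hi := by
        rw [hofE', Matrix.mul_assoc, hi1, Matrix.mul_one]
      have hγΓ : Q'i * Qof g = hi * hof g := by
        rw [hofE g hg, hrMeq]
        calc Q'i * ((Qof g' * hi) * hof g) = (Q'i * Qof g') * (hi * hof g) := by noncomm_ring
        _ = hi * hof g := by rw [hA2, Matrix.one_mul]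
      refine ⟨Q'i * Qof g, ?_, hγeq⟩
      rw [hγΓ]
      exact hΓmul hi hiΓ (hof g) (hofΓ g hg)
    · -- the coset identity
      show g = rp (eI.symm (eI (g.map ((↑) : ℤ → ZMod d), J g))) * (ginv g' * g)
      rw [Equiv.symm_apply_apply, ← hg'def, ← Matrix.mul_assoc, hgi1 g' hg', Matrix.one_mul]
  · -- differentiability
    have hlin : Differentiable ℂ (fun Z : Fin m → ℂ => Sc⁻¹ *ᵥ Z) :=
      (LinearMap.toContinuousLinearMap (Matrix.mulVecLin Sc⁻¹)).differentiable
    exact DifferentiableOn.comp hform.1 hlin.differentiableOn (fun Z hZ => hmemA Z hZ)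
  · -- homogeneity
    intro t ht Z hZ
    show F (Sc⁻¹ *ᵥ (t • Z)) = t ^ (-k) * F (Sc⁻¹ *ᵥ Z)
    rw [Matrix.mulVec_smul]
    exact hform.2.1 t ht _ (hmemA Z hZ)
  · -- equivariance
    rintro P ⟨hPo, Q, hQΓ, hPQ⟩ Z hZ
    obtain ⟨W, hW, rfl⟩ := hZ
    show F (Sc⁻¹ *ᵥ (MC P *ᵥ (Sc *ᵥ W))) = χB P * F (Sc⁻¹ *ᵥ (Sc *ᵥ W))
    rw [hact P Q hPQ W, hTSv, hTSv, hχB P Q hQΓ hPQ]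
    exact hform.2.2 Q hQΓ W hW
  · -- nonconstant
    rintro ⟨c, hc⟩
    refine hnc ⟨c, fun W hW => ?_⟩
    have h1 := hc (Sc *ᵥ W) (hmemB W hW)
    rwa [hFB W] at h1
  · -- zero divisor
    rintro Z ⟨W, hW, rfl⟩ hFZ
    rw [hFB W] at hFZ
    obtain ⟨l, hl2, horth⟩ := hzero W hW hFZ
    refine ⟨S *ᵥ l, ?_, ?_⟩
    · show IntLat.qf ⟨m, B⟩ (S *ᵥ l) = 2
      rw [qf_transport hS]
      exact hl2
    · show IntLat.bC ⟨m, B⟩ (Sc *ᵥ W) (fun i => ((S *ᵥ l) i : ℂ)) = 0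
      have hcast : (fun i => (((S *ᵥ l) i : ℤ) : ℂ)) = Sc *ᵥ (fun i => ((l i : ℤ) : ℂ)) := by
        funext i
        simp [hScdef, MC, Matrix.mulVec, dotProduct]
      rw [hcast, hScdef, bC_transport hS]
      exact horth

end TwoReflAux

/-- **Lemma 2.6 (Ma).** If an even lattice `M` of signature `(n,2)` with `n ≥ 3` is
`2`-reflective, then every even overlattice of `M` is `2`-reflective (equivalently,
if `M` is not `2`-reflective, then no finite-index even sublattice of `M` is). -/
theorem overlattice_two_reflective (M : IntLat) (n : ℕ) (hn : 3 ≤ n)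
    (hM : IsEvenLat M) (hsig : HasSig M n 2) (h : IsTwoReflective M) :
    ∀ N : IntLat, IsEvenOverlattice N M → IsTwoReflective N := by
  intro N hN
  obtain ⟨hNeven, hnm, S, hS⟩ := hN
  obtain ⟨mm, A⟩ := M
  obtain ⟨nn, B⟩ := N
  have hnm' : nn = mm := hnm
  subst hnm'
  exact TwoReflAux.key _ A B S hM.2.2 hS h
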